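/- For the negative triangle C_3^- the balancing dimension equals 3. -/

import Mathlib

open Finset

/-- The sign of a real number, as an integer. -/
noncomputable def sgnZ (x : ℝ) : ℤ := if 0 < x then 1 else if x < 0 then -1 else 0

/-- The standard inner product on `ℝ^k`. -/
def dotp {k : ℕ} (a b : Fin k → ℝ) : ℝ := ∑ i, a i * b i

/-- Membership in `Ω^k` where `Ω = {-1,0,1}`. -/
def InOmega {k : ℕ} (a : Fin k → ℝ) : Prop := ∀ i, a i = -1 ∨ a i = 0 ∨ a i = 1

/-- `σ` is a sign function for the graph `G`: symmetric and `±1`-valued on edges,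
so that `(G, σ)` is a signed graph. -/
def IsSignFn {V : Type*} (G : SimpleGraph V) (σ : V → V → ℤ) : Prop :=
  (∀ u v, σ u v = σ v u) ∧ ∀ u v, G.Adj u v → σ u v = 1 ∨ σ u v = -1

/-- `ζ : V → Ω^k` is a vector valued (`k`-)switching function for the signed graph:
`⟨ζ u, ζ v⟩ ≠ 0` for every edge `uv`. -/
def IsSwitching {V : Type*} (G : SimpleGraph V) {k : ℕ} (ζ : V → Fin k → ℝ) : Prop :=
  (∀ v, InOmega (ζ v)) ∧ ∀ u v, G.Adj u v → dotp (ζ u) (ζ v) ≠ 0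

/-- The sign function of the switched signed graph `Σ^ζ`:
`σ^ζ(uv) = σ(uv) · sgn ⟨ζ u, ζ v⟩`. -/
noncomputable def switchSign {V : Type*} (σ : V → V → ℤ) {k : ℕ} (ζ : V → Fin k → ℝ) : V → V → ℤ :=
  fun u v => σ u v * sgnZ (dotp (ζ u) (ζ v))

/-- `ζ : V → Ω^k` is a positive `k`-switching function (a `k`-positive function):
it switches `Σ` to the all positive signed graph. -/
def IsPositive {V : Type*} (G : SimpleGraph V) (σ : V → V → ℤ) {k : ℕ}
    (ζ : V → Fin k → ℝ) : Prop :=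
  (∀ v, InOmega (ζ v)) ∧ ∀ u v, G.Adj u v → switchSign σ ζ u v = 1

/-- The balancing dimension: the least `k ≥ 1` admitting a `k`-positive function. -/
noncomputable def bdim {V : Type*} (G : SimpleGraph V) (σ : V → V → ℤ) : ℕ :=
  sInf {k | 1 ≤ k ∧ ∃ ζ : V → Fin k → ℝ, IsPositive G σ ζ}

/-- The strong balancing dimension: the least `k ≥ 1` admitting an injective
`k`-positive function. -/
noncomputable def sbdim {V : Type*} (G : SimpleGraph V) (σ : V → V → ℤ) : ℕ :=
  sInf {k | 1 ≤ k ∧ ∃ ζ : V → Fin k → ℝ, Function.Injective ζ ∧ IsPositive G σ ζ}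


lemma sgnZ_eq_one_iff {x : ℝ} : sgnZ x = 1 ↔ 0 < x := by
  unfold sgnZ; split_ifs with h1 h2 <;> simp_all

lemma sgnZ_eq_neg_one_iff {x : ℝ} : sgnZ x = -1 ↔ x < 0 := by
  unfold sgnZ; split_ifs with h1 h2 <;> simp_all; linarith

def sig3 : Fin 3 → Fin 3 → ℤ :=
  fun u v => if (u = 0 ∧ v = 1) ∨ (u = 1 ∧ v = 0) then (-1 : ℤ) else 1

lemma pos_dots {k : ℕ} (ζ : Fin 3 → Fin k → ℝ)
    (h : IsPositive (⊤ : SimpleGraph (Fin 3)) sig3 ζ) :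
    dotp (ζ 0) (ζ 1) < 0 ∧ 0 < dotp (ζ 0) (ζ 2) ∧ 0 < dotp (ζ 1) (ζ 2) := by
  have h01 := h.2 0 1 (by simp)
  have h02 := h.2 0 2 (by simp)
  have h12 := h.2 1 2 (by simp)
  simp only [switchSign, sig3] at h01 h02 h12
  norm_num at h01 h02 h12
  refine ⟨?_, ?_, ?_⟩
  · rw [← sgnZ_eq_neg_one_iff]; omega
  · rw [← sgnZ_eq_one_iff]; omega
  · rw [← sgnZ_eq_one_iff]; omega

lemma no1 (ζ : Fin 3 → Fin 1 → ℝ) : ¬ IsPositive (⊤ : SimpleGraph (Fin 3)) sig3 ζ := by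
  intro h
  obtain ⟨d01, d02, d12⟩ := pos_dots ζ h
  simp only [dotp, Fin.sum_univ_one] at d01 d02 d12
  nlinarith [mul_pos d02 d12, mul_nonneg (sq_nonneg (ζ 2 0)) (le_of_lt (neg_pos.mpr d01))]

lemma no2 (ζ : Fin 3 → Fin 2 → ℝ) : ¬ IsPositive (⊤ : SimpleGraph (Fin 3)) sig3 ζ := by
  intro h
  obtain ⟨d01, d02, d12⟩ := pos_dots ζ h
  simp only [dotp, Fin.sum_univ_two] at d01 d02 d12
  rcases h.1 0 0 with h1 | h1 | h1 <;> rcases h.1 0 1 with h2 | h2 | h2 <;>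
  rcases h.1 1 0 with h3 | h3 | h3 <;> rcases h.1 1 1 with h4 | h4 | h4 <;>
  rcases h.1 2 0 with h5 | h5 | h5 <;> rcases h.1 2 1 with h6 | h6 | h6 <;>
  simp only [h1, h2, h3, h4, h5, h6] at d01 d02 d12 <;> linarith

/-- The negative triangle `C₃⁻` (one negative edge) has balancing dimension `3`. -/
theorem bdim_C3_neg :
    bdim (⊤ : SimpleGraph (Fin 3))
      (fun u v => if (u = 0 ∧ v = 1) ∨ (u = 1 ∧ v = 0) then (-1 : ℤ) else 1) = 3 := by
  have hσ : (fun (u v : Fin 3) => if (u = 0 ∧ v = 1) ∨ (u = 1 ∧ v = 0) then (-1 : ℤ) else 1) = sig3 := rfl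
  rw [hσ]
  have h3 : (3 : ℕ) ∈ {k | 1 ≤ k ∧ ∃ ζ : Fin 3 → Fin k → ℝ, IsPositive (⊤ : SimpleGraph (Fin 3)) sig3 ζ} := by
    refine ⟨by norm_num, ![![1,1,1], ![-1,0,0], ![-1,1,1]], fun v => ?_, fun u v huv => ?_⟩
    · intro i; fin_cases v <;> fin_cases i <;> norm_num
    · fin_cases u <;> fin_cases v <;>
        simp only [SimpleGraph.top_adj, ne_eq] at huv <;>
        first
          | exact absurd rfl huv
          | exact absurd trivial huv
          | (norm_num [switchSign, sig3, dotp, Fin.sum_univ_three, sgnZ, Matrix.cons_val_two, Matrix.tail_cons, Matrix.head_cons] <;> decide)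
  refine le_antisymm (Nat.sInf_le h3) (le_csInf ⟨3, h3⟩ ?_)
  rintro k ⟨hk1, ζ, hζ⟩
  by_contra hlt
  push_neg at hlt
  interval_cases k
  · exact no1 ζ hζ
  · exact no2 ζ hζ
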